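/- In a quandle X, if type(X) is finite and n is a positive integer coprime to type(X), then the equivalence relation generated by x ∼ x *^n y (for all x, y ∈ X) identifies x with x * y for all x, y; i.e., the quotient quandle X/∼_n is trivial (its induced operation satisfies [x] * [y] = [x] and all right translations are the identity). -/

import Mathlib

/-- A quandle: a set with a binary operation `op` such that `op x x = x`,
right translations are bijective, and `op` is right self-distributive. -/
structure Qdl (X : Type*) where
  op : X → X → X
  idem : ∀ x, op x x = x
  bij : ∀ y, Function.Bijective (fun x => op x y)
  distrib : ∀ x y z, op (op x y) z = op (op x z) (op y z)

namespace Qdl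

variable {X : Type*}

/-- The right translation `S_y` as a permutation of `X`. -/
noncomputable def S (q : Qdl X) (y : X) : Equiv.Perm X := Equiv.ofBijective _ (q.bij y)

/-- `x *^n y` : the `n`-fold application of the right translation by `y` to `x`. -/
noncomputable def npow (q : Qdl X) (x : X) (n : ℕ) (y : X) : X := ((q.S y) ^ n) x

/-- `x *^m y` for an integer `m` (negative powers use the inverse translation). -/
noncomputable def zpow (q : Qdl X) (x : X) (m : ℤ) (y : X) : X := ((q.S y) ^ m) x

end Qdl

def typeSet {X : Type*} (q : Qdl X) : Set ℕ := {n | 0 < n ∧ ∀ x y, q.npow x n y = x}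

/-- The type of a quandle (least positive `n` with `x *^n y = x` for all `x, y`;
`sInf ∅ = 0` plays the role of `∞`). -/
noncomputable def qtype {X : Type*} (q : Qdl X) : ℕ := sInf (typeSet q)

private lemma chain {X : Type*} (q : Qdl X) (n : ℕ) (x y : X) :
    ∀ k : ℕ, Relation.EqvGen (fun a b : X => ∃ c : X, b = q.npow a n c) x ((q.S y ^ (n * k)) x) := by
  intro k
  induction k with
  | zero => simpa using Relation.EqvGen.refl x
  | succ k ih =>
      refine Relation.EqvGen.trans _ _ _ ih (Relation.EqvGen.rel _ _ ⟨y, ?_⟩)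
      simp [Qdl.npow, mul_add, pow_add, pow_mul_comm, Equiv.Perm.mul_apply]

/-- if `type(X)` is finite and `n` is a positive integer coprime to
`type(X)`, then the equivalence relation `∼_n` generated by `x ∼ x *^n y` identifies
`x` with `x * y` for all `x, y`; hence the quotient quandle `X/∼_n` is trivial. -/
theorem stmt17 {X : Type*} (q : Qdl X) (n : ℕ) (hn : 0 < n)
    (hfin : (typeSet q).Nonempty)
    (hcop : Nat.Coprime n (qtype q)) :
    ∀ x y : X,
      Relation.EqvGen (fun a b : X => ∃ c : X, b = q.npow a n c) x (q.op x y) := by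
  intro x y
  have hmem : qtype q ∈ typeSet q := Nat.sInf_mem hfin
  obtain ⟨ht0, ht⟩ := hmem
  set t := qtype q with htdef
  have hSt : ∀ z : X, q.S y ^ t = 1 := by
    intro z
    ext w
    simpa [Qdl.npow] using ht w y
  have hop : q.op x y = q.S y x := rfl
  rcases Nat.eq_or_lt_of_le ht0 with h1 | h1
  · -- t = 1
    have : q.op x y = x := by
      have := ht x y
      simpa [Qdl.npow, ← h1, hop] using this
    rw [this]; exact Relation.EqvGen.refl x
  · obtain ⟨k, -, hk⟩ := Nat.exists_mul_mod_eq_one_of_coprime hcop h1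
    have key : (q.S y ^ (n * k)) x = q.op x y := by
      have : q.S y ^ (n * k) = q.S y ^ (n * k % t) := by
        conv_lhs => rw [← Nat.div_add_mod (n * k) t]
        rw [pow_add, pow_mul, hSt x, one_pow, one_mul]
      rw [this, hk, pow_one, hop]
    have := chain q n x y k
    rwa [key] at this
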